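/- arXiv:1212.1027 — 7 statements merged into one kernel-verified Lean document; each statement's English description precedes it below -/
import Mathlib

section
/- For every natural number n ≥ 1 and every real x, the absolute value of the derivative of the n-th iterate of cosine is bounded by |d/dx (cos^[n])(x)| ≤ (sin 1)^(n-1). -/
open Real

lemma aux_sin_cos_le (y : ℝ) : |Real.sin (Real.cos y)| ≤ Real.sin 1 := by
  have h1 := Real.neg_one_le_cos y
  have h2 := Real.cos_le_one y
  have hpi : (1:ℝ) ≤ π / 2 := by
    have := Real.pi_gt_three; linarith
  rw [abs_le]
  constructor
  · rw [← Real.sin_neg]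
    exact Real.sin_le_sin_of_le_of_le_pi_div_two (by linarith) (by linarith) (by linarith)
  · exact Real.sin_le_sin_of_le_of_le_pi_div_two (by linarith) hpi h2

theorem abs_deriv_iterate_cos_le (n : ℕ) (hn : 1 ≤ n) (x : ℝ) :
    |deriv (Real.cos^[n]) x| ≤ (Real.sin 1) ^ (n - 1) := by
  induction n, hn using Nat.le_induction with
  | base =>
    simp only [Function.iterate_one, Real.deriv_cos', pow_zero]
    rw [abs_neg, abs_le]
    exact ⟨Real.neg_one_le_sin x, Real.sin_le_one x⟩
  | succ n hn ih =>
    have hd : Differentiable ℝ (Real.cos^[n]) := Real.differentiable_cos.iterate n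
    have hcomp : Real.cos^[n + 1] = Real.cos ∘ Real.cos^[n] := by
      rw [Function.iterate_succ']
    rw [hcomp, deriv_comp _ Real.differentiable_cos.differentiableAt (hd x),
      Real.deriv_cos]
    have hy : ∃ y, Real.cos^[n] x = Real.cos y := by
      obtain ⟨m, rfl⟩ := Nat.exists_eq_add_of_le hn
      rw [add_comm, Function.iterate_succ_apply']
      exact ⟨_, rfl⟩
    obtain ⟨y, hy⟩ := hy
    rw [abs_mul, abs_neg, hy]
    calc |Real.sin (Real.cos y)| * |deriv (Real.cos^[n]) x|
        ≤ Real.sin 1 * Real.sin 1 ^ (n - 1) := by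
          apply mul_le_mul (aux_sin_cos_le y) ih (abs_nonneg _)
          exact Real.sin_nonneg_of_nonneg_of_le_pi zero_le_one (by have := Real.pi_gt_three; linarith)
      _ = Real.sin 1 ^ (n + 1 - 1) := by
          rw [← pow_succ']
          congr 1
          omega
end

section
/- For every real x, the sequence of derivatives of the iterates of cosine at x tends to zero: lim_{n → ∞} d/dx (cos^[n])(x) = 0. -/
open Filter Topology

lemma diff_iter_cos (n : ℕ) : Differentiable ℝ (Real.cos^[n]) := by
  induction n with
  | zero => simpa using differentiable_id
  | succ n ih =>
    rw [Function.iterate_succ']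
    exact Real.differentiable_cos.comp ih

lemma abs_sin_le_sin_one {y : ℝ} (hy : |y| ≤ 1) : |Real.sin y| ≤ Real.sin 1 := by
  have hpi3 := Real.pi_gt_three
  have h1 : |Real.sin y| = Real.sin |y| := by
    rcases le_or_gt 0 y with h | h
    · rw [abs_of_nonneg h, abs_of_nonneg (Real.sin_nonneg_of_nonneg_of_le_pi h
        (by rw [abs_of_nonneg h] at hy; linarith))]
    · rw [abs_of_neg h, Real.sin_neg, abs_of_nonpos
        (Real.sin_nonpos_of_nonpos_of_neg_pi_le h.le
          (by rw [abs_of_neg h] at hy; linarith))]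
  rw [h1]
  have hpi : (1 : ℝ) ≤ Real.pi / 2 := by linarith
  exact Real.strictMonoOn_sin.monotoneOn
    ⟨by linarith [abs_nonneg y], le_trans hy hpi⟩
    ⟨by linarith, hpi⟩ hy

lemma deriv_iter_cos_bound (n : ℕ) (x : ℝ) :
    |deriv (Real.cos^[n + 1]) x| ≤ Real.sin 1 ^ n := by
  induction n generalizing x with
  | zero =>
    simp [Real.deriv_cos, abs_neg, Real.abs_sin_le_one]
  | succ n ih =>
    have hcomp : Real.cos^[n + 2] = Real.cos ∘ Real.cos^[n + 1] := by
      rw [Function.iterate_succ']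
    rw [hcomp, deriv_comp x Real.differentiable_cos.differentiableAt
      ((diff_iter_cos (n + 1)).differentiableAt), Real.deriv_cos, abs_mul, abs_neg]
    have h1 : |Real.sin (Real.cos^[n + 1] x)| ≤ Real.sin 1 := by
      apply abs_sin_le_sin_one
      have : Real.cos^[n + 1] x = Real.cos (Real.cos^[n] x) := by
        rw [Function.iterate_succ']; rfl
      rw [this]
      exact Real.abs_cos_le_one _
    calc |Real.sin (Real.cos^[n + 1] x)| * |deriv (Real.cos^[n + 1]) x|
        ≤ Real.sin 1 * Real.sin 1 ^ n := by
          apply mul_le_mul h1 (ih x) (abs_nonneg _)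
          exact Real.sin_nonneg_of_nonneg_of_le_pi one_pos.le
            (by have := Real.pi_gt_three; linarith)
      _ = Real.sin 1 ^ (n + 1) := (pow_succ' _ _).symm

theorem tendsto_deriv_iterate_cos (x : ℝ) :
    Tendsto (fun n : ℕ => deriv (Real.cos^[n]) x) atTop (𝓝 0) := by
  rw [← Filter.tendsto_add_atTop_iff_nat 1]
  apply squeeze_zero_norm' (a := fun n => Real.sin 1 ^ n)
  · exact Filter.Eventually.of_forall fun n => deriv_iter_cos_bound n x
  · exact tendsto_pow_atTop_nhds_zero_of_lt_one
      (Real.sin_nonneg_of_nonneg_of_le_pi one_pos.le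
        (by have := Real.pi_gt_three; linarith))
      (Real.sin_lt one_pos)
end

section
/- Let D be the unique real number with cos(D) = D. For every real x, the iterates of cosine starting at x converge to D: lim_{n → ∞} cos^[n](x) = D. -/
open Filter Topology

noncomputable def Kc : NNReal := ⟨Real.sin 1, Real.sin_nonneg_of_nonneg_of_le_pi (by norm_num) (by linarith [Real.pi_gt_three])⟩

lemma cos_mem_Icc01 {y : ℝ} (hy : y ∈ Set.Icc (-1 : ℝ) 1) : Real.cos y ∈ Set.Icc (0:ℝ) 1 := by
  refine ⟨Real.cos_nonneg_of_mem_Icc ⟨by nlinarith [hy.1, Real.pi_gt_three], by nlinarith [hy.2, Real.pi_gt_three]⟩, Real.cos_le_one y⟩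

lemma cos_lipschitzOn : LipschitzOnWith Kc Real.cos (Set.Icc (0:ℝ) 1) := by
  apply Convex.lipschitzOnWith_of_nnnorm_deriv_le (fun x _ => Real.differentiable_cos x)
    ?_ (convex_Icc 0 1)
  intro x hx
  rw [Real.deriv_cos]
  show ‖-Real.sin x‖₊ ≤ Kc
  rw [← NNReal.coe_le_coe]
  simp only [coe_nnnorm, norm_neg, Real.norm_eq_abs]
  rw [abs_of_nonneg (Real.sin_nonneg_of_nonneg_of_le_pi hx.1 (by nlinarith [hx.2, Real.pi_gt_three]))]
  exact Real.sin_le_sin_of_le_of_le_pi_div_two (by nlinarith [hx.1, Real.pi_pos]) (by nlinarith [Real.pi_gt_three]) hx.2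

noncomputable def fcos : Set.Icc (0:ℝ) 1 → Set.Icc (0:ℝ) 1 :=
  fun y => ⟨Real.cos y, cos_mem_Icc01 ⟨by linarith [y.2.1], y.2.2⟩⟩

lemma fcos_contracting : ContractingWith Kc fcos := by
  constructor
  · rw [← NNReal.coe_lt_coe, NNReal.coe_one]
    exact lt_of_lt_of_le (Real.sin_lt (by norm_num)) (le_refl 1)
  · intro a b
    rw [Subtype.edist_eq]
    exact cos_lipschitzOn a.2 b.2

lemma fcos_iterate (y : Set.Icc (0:ℝ) 1) (n : ℕ) : (fcos^[n] y : ℝ) = Real.cos^[n] (y : ℝ) := by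
  induction n with
  | zero => rfl
  | succ n ih => rw [Function.iterate_succ_apply', Function.iterate_succ_apply']; simp [fcos, ih]

theorem tendsto_iterate_cos (D : ℝ) (hD : Real.cos D = D) (x : ℝ) :
    Tendsto (fun n : ℕ => Real.cos^[n] x) atTop (𝓝 D) := by
  have hD1 : D ∈ Set.Icc (-1 : ℝ) 1 := by
    rw [← hD]; exact ⟨Real.neg_one_le_cos D, Real.cos_le_one D⟩
  have hDmem : D ∈ Set.Icc (0:ℝ) 1 := by rw [← hD]; exact cos_mem_Icc01 hD1
  have hfix : Function.IsFixedPt fcos ⟨D, hDmem⟩ := by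
    simp [Function.IsFixedPt, fcos, hD]
  have hDeq : (⟨D, hDmem⟩ : Set.Icc (0:ℝ) 1) = ContractingWith.fixedPoint fcos fcos_contracting :=
    fcos_contracting.fixedPoint_unique hfix
  -- start point after two iterations lands in Icc 0 1
  set y : ℝ := Real.cos (Real.cos x) with hy
  have hymem : y ∈ Set.Icc (0:ℝ) 1 :=
    cos_mem_Icc01 ⟨Real.neg_one_le_cos x, Real.cos_le_one x⟩
  have ht : Tendsto (fun n : ℕ => Real.cos^[n] y) atTop (𝓝 D) := by
    have := fcos_contracting.tendsto_iterate_fixedPoint (⟨y, hymem⟩ : Set.Icc (0:ℝ) 1)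
    rw [← hDeq] at this
    have h2 := (continuous_subtype_val.tendsto _).comp this
    simp only [Function.comp_def] at h2
    convert h2 using 2 with n
    exact (fcos_iterate ⟨y, hymem⟩ n).symm
  have : Tendsto (fun n : ℕ => Real.cos^[n + 2] x) atTop (𝓝 D) := by
    have : ∀ n : ℕ, Real.cos^[n + 2] x = Real.cos^[n] y := by
      intro n
      rw [Function.iterate_add_apply]
      rfl
    simpa [this] using ht
  exact (Filter.tendsto_add_atTop_iff_nat 2).mp this
end

section
/- For every real x, the iterates of sine starting at x converge to zero: lim_{n → ∞} sin^[n](x) = 0. -/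
open Filter Topology

lemma iterate_sin_neg (n : ℕ) (x : ℝ) : Real.sin^[n] (-x) = -Real.sin^[n] x := by
  induction n generalizing x with
  | zero => simp
  | succ n ih =>
    rw [Function.iterate_succ_apply, Real.sin_neg, ih, Function.iterate_succ_apply]

lemma iterate_sin_mem (x : ℝ) (hx : x ∈ Set.Icc (0:ℝ) 1) (n : ℕ) :
    Real.sin^[n] x ∈ Set.Icc (0:ℝ) 1 := by
  induction n with
  | zero => simpa
  | succ n ih =>
    rw [Function.iterate_succ_apply']
    obtain ⟨h0, h1⟩ := ih
    constructor
    · exact Real.sin_nonneg_of_nonneg_of_le_pi h0 (h1.trans (by linarith [Real.pi_gt_three]))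
    · exact (Real.sin_le h0).trans h1

lemma tendsto_iterate_sin_of_mem (x : ℝ) (hx : x ∈ Set.Icc (0:ℝ) 1) :
    Tendsto (fun n : ℕ => Real.sin^[n] x) atTop (𝓝 0) := by
  set a : ℕ → ℝ := fun n => Real.sin^[n] x with ha
  have hmem := iterate_sin_mem x hx
  have hanti : Antitone a := by
    apply antitone_nat_of_succ_le
    intro n
    show Real.sin^[n+1] x ≤ Real.sin^[n] x
    rw [Function.iterate_succ_apply']
    exact Real.sin_le (hmem n).1
  have hbdd : BddBelow (Set.range a) := ⟨0, fun y ⟨n, hn⟩ => hn ▸ (hmem n).1⟩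
  have hlim : Tendsto a atTop (𝓝 (⨅ n, a n)) := tendsto_atTop_ciInf hanti hbdd
  set L := ⨅ n, a n with hL
  have hL0 : 0 ≤ L := le_ciInf fun n => (hmem n).1
  have hfix : Real.sin L = L := by
    have h1 : Tendsto (fun n => a (n + 1)) atTop (𝓝 L) :=
      hlim.comp (tendsto_add_atTop_nat 1)
    have h2 : Tendsto (fun n => Real.sin (a n)) atTop (𝓝 (Real.sin L)) :=
      (Real.continuous_sin.tendsto L).comp hlim
    have heq : (fun n => a (n + 1)) = fun n => Real.sin (a n) := by
      funext n; exact Function.iterate_succ_apply' _ _ _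
    rw [heq] at h1
    exact tendsto_nhds_unique h2 h1
  have hLz : L = 0 := by
    by_contra h
    have hLpos : 0 < L := lt_of_le_of_ne hL0 (Ne.symm h)
    have := Real.sin_lt hLpos
    linarith [hfix]
  rwa [hLz] at hlim

theorem tendsto_iterate_sin (x : ℝ) :
    Tendsto (fun n : ℕ => Real.sin^[n] x) atTop (𝓝 0) := by
  have key : Tendsto (fun n : ℕ => Real.sin^[n] (Real.sin x)) atTop (𝓝 0) := by
    rcases le_or_gt 0 (Real.sin x) with h | h
    · exact tendsto_iterate_sin_of_mem _ ⟨h, Real.sin_le_one x⟩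
    · have hpos : -Real.sin x ∈ Set.Icc (0:ℝ) 1 := by
        constructor
        · linarith
        · linarith [Real.neg_one_le_sin x]
      have := (tendsto_iterate_sin_of_mem _ hpos).neg
      rw [neg_zero] at this
      convert this using 2 with n
      rw [← iterate_sin_neg, neg_neg]
  have : Tendsto (fun n : ℕ => Real.sin^[n + 1] x) atTop (𝓝 0) := by
    simpa [Function.iterate_succ_apply] using key
  rw [← tendsto_add_atTop_iff_nat 1]
  exact this
end

section
/- For every natural number n > 1 and every real x, the value of the n-th iterate of cosine satisfies cos^[n-1-(n % 2)](1) ≤ cos^[n](x) ≤ cos^[n-2+(n % 2)](1), where n % 2 denotes the remainder of n modulo 2. -/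
open Real

lemma cos_step {a b : ℝ} (ha : 0 ≤ a) (hab : a ≤ b) (hb : b ≤ 1) :
    Real.cos b ≤ Real.cos a :=
  Real.cos_le_cos_of_nonneg_of_le_pi ha (by linarith [Real.pi_gt_three]) hab

lemma cos_iter_mem (k : ℕ) : 0 ≤ Real.cos^[k+1] 1 ∧ Real.cos^[k+1] 1 ≤ 1 := by
  induction k with
  | zero =>
    simp only [Nat.zero_add, Function.iterate_one]
    refine ⟨Real.cos_nonneg_of_mem_Icc ⟨?_, ?_⟩, Real.cos_le_one 1⟩ <;>
      linarith [Real.pi_gt_three]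
  | succ k ih =>
    rw [Function.iterate_succ_apply']
    refine ⟨Real.cos_nonneg_of_mem_Icc ⟨?_, ?_⟩, Real.cos_le_one _⟩ <;>
      linarith [Real.pi_gt_three, ih.1, ih.2]

lemma cos_iter_le_one (k : ℕ) : Real.cos^[k] 1 ≤ 1 := by
  cases k with
  | zero => simp
  | succ k => exact (cos_iter_mem k).2

lemma aux (m : ℕ) (x : ℝ) :
    Real.cos^[2*m+1] 1 ≤ Real.cos^[2*m+2] x ∧ Real.cos^[2*m+2] x ≤ Real.cos^[2*m] 1 := by
  induction m with
  | zero =>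
    simp only [Function.iterate_succ_apply', Nat.mul_zero, Nat.zero_add,
      Function.iterate_one, Function.iterate_zero, id_eq]
    constructor
    · have h1 : Real.cos x ≤ 1 := Real.cos_le_one x
      have h2 : -1 ≤ Real.cos x := Real.neg_one_le_cos x
      rcases le_total 0 (Real.cos x) with h | h
      · exact cos_step h h1 le_rfl
      · rw [show Real.cos (Real.cos x) = Real.cos (-(Real.cos x)) by rw [Real.cos_neg]]
        exact cos_step (by linarith) (by linarith) le_rfl
    · exact Real.cos_le_one _
  | succ m ih =>
    have hb := cos_iter_mem (2*m)
    have hx0 : 0 ≤ Real.cos^[2*m+2] x := le_trans hb.1 ih.1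
    have hx1 : Real.cos^[2*m+2] x ≤ 1 := le_trans ih.2 (cos_iter_le_one (2*m))
    have hodd1 : Real.cos^[2*m+1] 1 ≤ Real.cos^[2*m+3] x := by
      show Real.cos^[(2*m)+1] 1 ≤ Real.cos^[(2*m+2)+1] x
      rw [Function.iterate_succ_apply' Real.cos (2*m) 1, Function.iterate_succ_apply' Real.cos (2*m+2) x]
      exact cos_step hx0 ih.2 (cos_iter_le_one (2*m))
    have hodd2 : Real.cos^[2*m+3] x ≤ Real.cos^[2*m+2] 1 := by
      show Real.cos^[(2*m+2)+1] x ≤ Real.cos^[(2*m+1)+1] 1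
      rw [Function.iterate_succ_apply' Real.cos (2*m+2) x, Function.iterate_succ_apply' Real.cos (2*m+1) 1]
      exact cos_step hb.1 ih.1 hx1
    have hx0' : 0 ≤ Real.cos^[2*m+3] x := le_trans hb.1 hodd1
    have hx1' : Real.cos^[2*m+3] x ≤ 1 := le_trans hodd2 (cos_iter_le_one (2*m+2))
    constructor
    · show Real.cos^[(2*m+2)+1] 1 ≤ Real.cos^[(2*m+3)+1] x
      rw [Function.iterate_succ_apply' Real.cos (2*m+2) 1, Function.iterate_succ_apply' Real.cos (2*m+3) x]
      exact cos_step hx0' hodd2 (cos_iter_le_one (2*m+2))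
    · show Real.cos^[(2*m+3)+1] x ≤ Real.cos^[(2*m+1)+1] 1
      rw [Function.iterate_succ_apply' Real.cos (2*m+3) x, Function.iterate_succ_apply' Real.cos (2*m+1) 1]
      exact cos_step (cos_iter_mem (2*m)).1 hodd1 hx1'

theorem iterate_cos_range_bounds (n : ℕ) (hn : 1 < n) (x : ℝ) :
    Real.cos^[n - 1 - (n % 2)] 1 ≤ Real.cos^[n] x ∧
    Real.cos^[n] x ≤ Real.cos^[n - 2 + (n % 2)] 1 := by
  rcases Nat.even_or_odd n with ⟨m, hm⟩ | ⟨m, hm⟩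
  · obtain ⟨k, rfl⟩ : ∃ k, n = 2*k+2 := ⟨m-1, by omega⟩
    rw [show (2*k+2) - 1 - ((2*k+2) % 2) = 2*k+1 by omega,
      show (2*k+2) - 2 + ((2*k+2) % 2) = 2*k by omega]
    exact aux k x
  · obtain ⟨k, rfl⟩ : ∃ k, n = 2*k+3 := ⟨m-1, by omega⟩
    rw [show (2*k+3) - 1 - ((2*k+3) % 2) = 2*k+1 by omega,
      show (2*k+3) - 2 + ((2*k+3) % 2) = 2*k+2 by omega]
    have ih := aux k x
    have hb := cos_iter_mem (2*k)
    have hx0 : 0 ≤ Real.cos^[2*k+2] x := le_trans hb.1 ih.1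
    have hx1 : Real.cos^[2*k+2] x ≤ 1 := le_trans ih.2 (cos_iter_le_one (2*k))
    constructor
    · show Real.cos^[(2*k)+1] 1 ≤ Real.cos^[(2*k+2)+1] x
      rw [Function.iterate_succ_apply' Real.cos (2*k) 1, Function.iterate_succ_apply' Real.cos (2*k+2) x]
      exact cos_step hx0 ih.2 (cos_iter_le_one (2*k))
    · show Real.cos^[(2*k+2)+1] x ≤ Real.cos^[(2*k+1)+1] 1
      rw [Function.iterate_succ_apply' Real.cos (2*k+2) x, Function.iterate_succ_apply' Real.cos (2*k+1) 1]
      exact cos_step hb.1 ih.1 hx1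
end

section
/- For every natural number n ≥ 1 and every real x, the derivative of the n-th iterate of sine vanishes at x if and only if x = π/2 + kπ for some integer k: d/dx (sin^[n])(x) = 0 ↔ ∃ k : ℤ, x = π/2 + k · π. -/
open Real

lemma diff_iter_sin (n : ℕ) : Differentiable ℝ (Real.sin^[n]) := by
  induction n with
  | zero => simp only [Function.iterate_zero]; exact differentiable_id
  | succ m ih =>
    rw [Function.iterate_succ]
    exact ih.comp Real.differentiable_sin

lemma cos_sin_ne_zero (y : ℝ) : Real.cos (Real.sin y) ≠ 0 := by
  have h1 : |Real.sin y| ≤ 1 := Real.abs_sin_le_one y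
  have hπ : (1 : ℝ) < π / 2 := by
    have := Real.pi_gt_three; linarith
  have : 0 < Real.cos (Real.sin y) := by
    apply Real.cos_pos_of_mem_Ioo
    constructor
    · have := abs_le.mp h1; linarith [this.1]
    · have := abs_le.mp h1; linarith [this.2]
  linarith

lemma deriv_iter_sin_zero_iff_cos (n : ℕ) (hn : 1 ≤ n) (x : ℝ) :
    deriv (Real.sin^[n]) x = 0 ↔ Real.cos x = 0 := by
  induction n generalizing x with
  | zero => omega
  | succ m ih =>
    rcases Nat.eq_or_lt_of_le hn with h | h
    · have : m = 0 := by omega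
      subst this
      simp [Real.deriv_sin]
    · have hm : 1 ≤ m := by omega
      rw [Function.iterate_succ]
      rw [deriv_comp x (diff_iter_sin m (Real.sin x)) (Real.differentiable_sin x)]
      rw [Real.deriv_sin]
      constructor
      · intro h0
        rcases mul_eq_zero.mp h0 with h1 | h1
        · exact absurd (((ih hm (Real.sin x)).mp h1)) (cos_sin_ne_zero x)
        · exact h1
      · intro h0
        rw [h0, mul_zero]

theorem deriv_iterate_sin_eq_zero_iff (n : ℕ) (hn : 1 ≤ n) (x : ℝ) :
    deriv (Real.sin^[n]) x = 0 ↔ ∃ k : ℤ, x = π / 2 + k * π := by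
  rw [deriv_iter_sin_zero_iff_cos n hn x, Real.cos_eq_zero_iff]
  constructor
  · rintro ⟨k, hk⟩; exact ⟨k, by rw [hk]; ring⟩
  · rintro ⟨k, hk⟩; exact ⟨k, by rw [hk]; ring⟩
end

section
/- For every natural number k ≥ 1, the k-th iterated derivative at 0 of the m-th iterate of cosine tends to zero as m tends to infinity: lim_{m → ∞} iteratedDeriv k (cos^[m]) 0 = 0; thus every Maclaurin coefficient of the iterates of cosine (other than the constant term, which tends to the Dottie number) vanishes in the limit. -/
open Filter Topology Finset

namespace CosIterAux

noncomputable def A (m k : ℕ) : ℝ := iteratedDeriv k (Real.cos^[m]) 0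
noncomputable def B (m k : ℕ) : ℝ := iteratedDeriv k (fun x => Real.sin (Real.cos^[m] x)) 0

lemma contDiff_iter (n m : ℕ) : ContDiff ℝ n (Real.cos^[m]) := by
  induction m with
  | zero => simpa using contDiff_id
  | succ m ih =>
    rw [Function.iterate_succ']
    exact Real.contDiff_cos.comp ih

lemma diff_iter (m : ℕ) : Differentiable ℝ (Real.cos^[m]) :=
  (contDiff_iter 1 m).differentiable (by norm_num)

lemma contDiff_deriv_iter (n m : ℕ) : ContDiff ℝ n (deriv (Real.cos^[m])) := by
  have h : ContDiff ℝ ((n : WithTop ℕ∞) + 1) (Real.cos^[m]) := by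
    exact_mod_cast contDiff_iter (n + 1) m
  exact (contDiff_succ_iff_deriv.mp h).2.2

lemma deriv_iter (m : ℕ) :
    deriv (Real.cos^[m + 1]) =
      fun x => -(Real.sin (Real.cos^[m] x) * deriv (Real.cos^[m]) x) := by
  funext x
  have hd : HasDerivAt (Real.cos^[m]) (deriv (Real.cos^[m]) x) x :=
    (diff_iter m x).hasDerivAt
  have h := hd.cos
  rw [Function.iterate_succ', Function.comp_def]
  rw [h.deriv]
  ring

lemma deriv_sin_iter (m : ℕ) :
    deriv (fun x => Real.sin (Real.cos^[m] x)) =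
      fun x => Real.cos^[m + 1] x * deriv (Real.cos^[m]) x := by
  funext x
  have hd : HasDerivAt (Real.cos^[m]) (deriv (Real.cos^[m]) x) x :=
    (diff_iter m x).hasDerivAt
  have h := hd.sin
  rw [h.deriv, Function.iterate_succ_apply']

lemma ineq1 (m n : ℕ) :
    |A (m + 1) (n + 1)| ≤
      ∑ j ∈ Finset.range (n + 1),
        (n.choose j : ℝ) * |B m j| * |A m (n - j + 1)| := by
  have hA : A (m + 1) (n + 1) =
      -(iteratedDeriv n (fun x => Real.sin (Real.cos^[m] x) * deriv (Real.cos^[m]) x) 0) := by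
    rw [A, iteratedDeriv_succ', deriv_iter m]
    exact iteratedDeriv_neg n _ 0
  rw [hA, abs_neg, ← Real.norm_eq_abs, ← norm_iteratedFDeriv_eq_norm_iteratedDeriv]
  have hf : ContDiff ℝ n (fun x => Real.sin (Real.cos^[m] x)) :=
    Real.contDiff_sin.comp (contDiff_iter n m)
  have hg : ContDiff ℝ n (deriv (Real.cos^[m])) := contDiff_deriv_iter n m
  refine le_trans (norm_iteratedFDeriv_mul_le hf hg 0 le_rfl) (le_of_eq ?_)
  refine Finset.sum_congr rfl fun j hj => ?_
  rw [norm_iteratedFDeriv_eq_norm_iteratedDeriv, norm_iteratedFDeriv_eq_norm_iteratedDeriv,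
    ← iteratedDeriv_succ', Real.norm_eq_abs, Real.norm_eq_abs]
  rfl

lemma ineq2 (m n : ℕ) :
    |B m (n + 1)| ≤
      ∑ j ∈ Finset.range (n + 1),
        (n.choose j : ℝ) * |A (m + 1) j| * |A m (n - j + 1)| := by
  have hB : B m (n + 1) =
      iteratedDeriv n (fun x => Real.cos^[m + 1] x * deriv (Real.cos^[m]) x) 0 := by
    rw [B, iteratedDeriv_succ', deriv_sin_iter m]
  rw [hB, ← Real.norm_eq_abs, ← norm_iteratedFDeriv_eq_norm_iteratedDeriv]
  have hf : ContDiff ℝ n (Real.cos^[m + 1]) := contDiff_iter n (m + 1)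
  have hg : ContDiff ℝ n (deriv (Real.cos^[m])) := contDiff_deriv_iter n m
  refine le_trans (norm_iteratedFDeriv_mul_le hf hg 0 le_rfl) (le_of_eq ?_)
  refine Finset.sum_congr rfl fun j hj => ?_
  rw [norm_iteratedFDeriv_eq_norm_iteratedDeriv, norm_iteratedFDeriv_eq_norm_iteratedDeriv,
    ← iteratedDeriv_succ', Real.norm_eq_abs, Real.norm_eq_abs]
  rfl

lemma mem01 (m : ℕ) : Real.cos^[m] 0 ∈ Set.Icc (0 : ℝ) 1 := by
  induction m with
  | zero => simp
  | succ m ih =>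
    rw [Function.iterate_succ_apply']
    obtain ⟨h0, h1⟩ := ih
    have hpi : (2 : ℝ) ≤ Real.pi := Real.two_le_pi
    constructor
    · exact Real.cos_nonneg_of_mem_Icc ⟨by linarith, by linarith⟩
    · exact Real.cos_le_one _

lemma hA0 (m : ℕ) : |A m 0| ≤ 1 := by
  rw [A, iteratedDeriv_zero]
  obtain ⟨h0, h1⟩ := mem01 m
  rw [abs_of_nonneg h0]; exact h1

lemma hB0 (m : ℕ) : |B m 0| ≤ Real.sin 1 := by
  rw [B, iteratedDeriv_zero]
  obtain ⟨h0, h1⟩ := mem01 m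
  have hpi : (2 : ℝ) ≤ Real.pi := Real.two_le_pi
  rw [abs_of_nonneg (Real.sin_nonneg_of_nonneg_of_le_pi h0 (by linarith))]
  exact Real.sin_le_sin_of_le_of_le_pi_div_two (by linarith) (by linarith) h1

lemma sin_one_lt_one : Real.sin 1 < 1 := by
  have := Real.sin_lt (show (0:ℝ) < 1 by norm_num)
  linarith

lemma tendsto_zero_of_contraction {a r : ℕ → ℝ} {s : ℝ} (hs0 : 0 ≤ s) (hs1 : s < 1)
    (ha : ∀ m, 0 ≤ a m) (hrec : ∀ m, a (m + 1) ≤ s * a m + r m)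
    (hr : Tendsto r atTop (𝓝 0)) : Tendsto a atTop (𝓝 0) := by
  rw [Metric.tendsto_atTop]
  intro ε hε
  obtain ⟨N, hN⟩ := (Metric.tendsto_atTop.mp hr) ((1 - s) * (ε / 2))
    (mul_pos (by linarith) (by linarith))
  have key : ∀ i, a (N + i) ≤ s ^ i * a N + ε / 2 := by
    intro i
    induction i with
    | zero => simp; linarith
    | succ i ih =>
      have hrN := hN (N + i) (Nat.le_add_right _ _)
      rw [Real.dist_eq, sub_zero] at hrN
      have hr' : r (N + i) ≤ (1 - s) * (ε / 2) := (le_abs_self _).trans hrN.le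
      have h1 : s * a (N + i) ≤ s * (s ^ i * a N + ε / 2) :=
        mul_le_mul_of_nonneg_left ih hs0
      have h2 : a (N + (i + 1)) ≤ s * a (N + i) + r (N + i) := by
        have := hrec (N + i); rwa [show N + (i + 1) = N + i + 1 by omega]
      have h3 : (s : ℝ) ^ (i + 1) = s * s ^ i := by ring
      rw [h3]
      nlinarith
  have hpow : Tendsto (fun i => s ^ i * a N + ε / 2) atTop (𝓝 (0 * a N + ε / 2)) :=
    ((tendsto_pow_atTop_nhds_zero_of_lt_one hs0 hs1).mul tendsto_const_nhds).add
      tendsto_const_nhds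
  rw [zero_mul, zero_add] at hpow
  have : ∀ᶠ i in atTop, s ^ i * a N + ε / 2 < ε :=
    hpow.eventually_lt_const (by linarith)
  obtain ⟨I, hI⟩ := this.exists
  refine ⟨N + I, fun m hm => ?_⟩
  rw [Real.dist_eq, sub_zero, abs_of_nonneg (ha m)]
  have hm' : m = N + (m - N) := by omega
  have hge : I ≤ m - N := by omega
  have hmono : s ^ (m - N) ≤ s ^ I := pow_le_pow_of_le_one hs0 hs1.le hge
  calc a m = a (N + (m - N)) := by rw [← hm']
    _ ≤ s ^ (m - N) * a N + ε / 2 := key _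
    _ ≤ s ^ I * a N + ε / 2 := by
        have := mul_le_mul_of_nonneg_right hmono (ha N); linarith
    _ < ε := hI

lemma key (n : ℕ) :
    Tendsto (fun m => A m (n + 1)) atTop (𝓝 0) ∧
      Tendsto (fun m => B m (n + 1)) atTop (𝓝 0) := by
  induction n using Nat.strong_induction_on with
  | _ n IH =>
  have hA : ∀ j, 1 ≤ j → j ≤ n → Tendsto (fun m => A m j) atTop (𝓝 0) := by
    intro j h1 h2
    obtain ⟨i, rfl⟩ : ∃ i, j = i + 1 := ⟨j - 1, by omega⟩
    exact (IH i (by omega)).1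
  have hB : ∀ j, 1 ≤ j → j ≤ n → Tendsto (fun m => B m j) atTop (𝓝 0) := by
    intro j h1 h2
    obtain ⟨i, rfl⟩ : ∃ i, j = i + 1 := ⟨j - 1, by omega⟩
    exact (IH i (by omega)).2
  have habs : Tendsto (fun m => |A m (n + 1)|) atTop (𝓝 0) := by
    refine tendsto_zero_of_contraction (s := Real.sin 1)
      (Real.sin_nonneg_of_nonneg_of_le_pi (by norm_num) (by linarith [Real.two_le_pi]))
      sin_one_lt_one (fun m => abs_nonneg _)
      (r := fun m => ∑ j ∈ Finset.range n,
        ((n.choose (j + 1) : ℝ) * |B m (j + 1)| * |A m (n - j)|)) ?_ ?_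
    · intro m
      have h := ineq1 m n
      rw [Finset.sum_range_succ'] at h
      have hcong : ∑ j ∈ Finset.range n,
          (n.choose (j + 1) : ℝ) * |B m (j + 1)| * |A m (n - (j + 1) + 1)| =
          ∑ j ∈ Finset.range n,
          (n.choose (j + 1) : ℝ) * |B m (j + 1)| * |A m (n - j)| := by
        refine Finset.sum_congr rfl fun j hj => ?_
        have hj' : j < n := Finset.mem_range.mp hj
        rw [show n - (j + 1) + 1 = n - j by omega]
      rw [hcong] at h
      have h0 : (n.choose 0 : ℝ) * |B m 0| * |A m (n - 0 + 1)| ≤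
          Real.sin 1 * |A m (n + 1)| := by
        simp only [Nat.choose_zero_right, Nat.cast_one, one_mul, Nat.sub_zero]
        exact mul_le_mul_of_nonneg_right (hB0 m) (abs_nonneg _)
      linarith
    · have hsum : Tendsto (fun m => ∑ j ∈ Finset.range n,
          ((n.choose (j + 1) : ℝ) * |B m (j + 1)| * |A m (n - j)|)) atTop
          (𝓝 (∑ _j ∈ Finset.range n, (0 : ℝ))) := by
        refine tendsto_finset_sum _ fun j hj => ?_
        have hj' : j < n := Finset.mem_range.mp hj
        have hb : Tendsto (fun m => |B m (j + 1)|) atTop (𝓝 0) := by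
          simpa using (hB (j + 1) (by omega) (by omega)).abs
        have ha : Tendsto (fun m => |A m (n - j)|) atTop (𝓝 0) := by
          simpa using (hA (n - j) (by omega) (by omega)).abs
        simpa using (hb.const_mul ((n.choose (j + 1) : ℝ))).mul ha
      simpa using hsum
  have hAret : Tendsto (fun m => A m (n + 1)) atTop (𝓝 0) :=
    squeeze_zero_norm (fun m => le_of_eq (Real.norm_eq_abs _)) habs
  refine ⟨hAret, ?_⟩
  refine squeeze_zero_norm (a := fun m => ∑ j ∈ Finset.range (n + 1),
      (n.choose j : ℝ) * |A (m + 1) j| * |A m (n - j + 1)|)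
      (fun m => by rw [Real.norm_eq_abs]; exact ineq2 m n) ?_
  have hsum2 : Tendsto (fun m => ∑ j ∈ Finset.range (n + 1),
      (n.choose j : ℝ) * |A (m + 1) j| * |A m (n - j + 1)|) atTop
      (𝓝 (∑ _j ∈ Finset.range (n + 1), (0 : ℝ))) := by
    refine tendsto_finset_sum _ fun j hj => ?_
    have hj' : j < n + 1 := Finset.mem_range.mp hj
    rcases Nat.eq_zero_or_pos j with rfl | hjpos
    · simp only [Nat.choose_zero_right, Nat.cast_one, one_mul, Nat.sub_zero]
      refine squeeze_zero (fun m => by positivity)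
        (fun m => mul_le_of_le_one_left (abs_nonneg _) (hA0 (m + 1))) habs
    · have h1 : Tendsto (fun m => |A (m + 1) j|) atTop (𝓝 0) := by
        have := (hA j hjpos (by omega)).comp (tendsto_add_atTop_nat 1)
        simpa [Function.comp] using this.abs
      have h2 : Tendsto (fun m => |A m (n - j + 1)|) atTop (𝓝 0) := by
        rcases Nat.lt_or_ge (n - j + 1) (n + 1) with hlt | hge
        · simpa using (hA (n - j + 1) (by omega) (by omega)).abs
        · have heq : n - j + 1 = n + 1 := by omega
          rw [heq]; exact habs
      simpa using (h1.const_mul ((n.choose j : ℝ))).mul h2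
  simpa using hsum2

end CosIterAux

theorem tendsto_iteratedDeriv_iterate_cos_at_zero (k : ℕ) (hk : 1 ≤ k) :
    Tendsto (fun m : ℕ => iteratedDeriv k (Real.cos^[m]) 0) atTop (𝓝 0) := by
  obtain ⟨n, rfl⟩ : ∃ n, k = n + 1 := ⟨k - 1, by omega⟩
  exact (CosIterAux.key n).1
end
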